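/- Let K ≥ 3, 1 > θ_1 > θ_2 > … > θ_K > 0, ε = 0, and 0 < c < θ_2(1−θ_1), so that μ* := μ((1,2)) = −c + θ_1 + (1−θ_1)θ_2 is the optimal mean reward. Consider minimizing Σ_{u∈U} η_u (μ* − μ(u)) over all η : U → [0,∞) subject to, for every k ∈ {3,…,K}, η_{(k)} + η_{(k,1)} ≥ 1/I(θ_k, θ_2). The minimum value equals C(θ) = Σ_{k=3}^K (1−θ_1)(θ_2−θ_k)/I(θ_k, θ_2), and it is attained by η* with η*_{(k,1)} = 1/I(θ_k, θ_2) for each k ≥ 3 and η*_u = 0 for every other policy u. -/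

import Mathlib

noncomputable section

/-- `p0 ε x = ε x + (1−ε)(1−x)`: probability that the ε-noisy measurement of a
Bernoulli(x) arm returns 0. -/
def p0 (ε x : ℝ) : ℝ := ε * x + (1 - ε) * (1 - x)

/-- A static policy: either play arm `k` directly, or measure arm `k` and play
arm `l` if the measurement is 1 and arm `m` if it is 0. -/
inductive Policy where
  | play (k : ℕ)
  | meas (k l m : ℕ)
deriving DecidableEq

/-- Mean reward `μ(u)` of a static policy `u`, with arm means `θ`, noise level `ε`,
and measurement cost `c`. -/
def reward (θ : ℕ → ℝ) (ε c : ℝ) : Policy → ℝ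
  | .play k => θ k
  | .meas k l m =>
      -c + (if l = k then (1 - ε) * θ k else (1 - p0 ε (θ k)) * θ l)
         + (if m = k then ε * θ k else p0 ε (θ k) * θ m)

/-- The finite set `U` of all static policies on arms `{1,…,K}`. -/
def allPolicies (K : ℕ) : Finset Policy :=
  ((Finset.Icc 1 K).image Policy.play) ∪
  (((Finset.Icc 1 K) ×ˢ (Finset.Icc 1 K) ×ˢ (Finset.Icc 1 K)).image
    fun p => Policy.meas p.1 p.2.1 p.2.2)

/-- `I(p,q)`: KL divergence between Bernoulli(p) and Bernoulli(q). -/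
def klBer (p q : ℝ) : ℝ :=
  p * Real.log (p / q) + (1 - p) * Real.log ((1 - p) / (1 - q))

/-- The optimal solution `η*` of the lower-bound LP in Case 1:
`η*_{(k,1)} = 1/I(θ_k,θ_2)` for `3 ≤ k ≤ K`, zero elsewhere. -/
def etaStar6 (K : ℕ) (θ : ℕ → ℝ) : Policy → ℝ
  | .meas k l m =>
      if l = k ∧ m = 1 ∧ 3 ≤ k ∧ k ≤ K then 1 / klBer (θ k) (θ 2) else 0
  | .play _ => 0

lemma klBer_pos' {p q : ℝ} (hp0 : 0 < p) (hq0 : 0 < q) (hq1 : q < 1) (hpq : p < q) :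
    0 < klBer p q := by
  have hp1 : p < 1 := hpq.trans hq1
  have h1p : (0:ℝ) < 1 - p := by linarith
  have h1q : (0:ℝ) < 1 - q := by linarith
  have h1 : Real.log (q / p) < q / p - 1 :=
    Real.log_lt_sub_one_of_pos (div_pos hq0 hp0) (by
      intro h
      rw [div_eq_one_iff_eq (ne_of_gt hp0)] at h
      linarith)
  have h2 : Real.log ((1 - q) / (1 - p)) < (1 - q) / (1 - p) - 1 :=
    Real.log_lt_sub_one_of_pos (div_pos h1q h1p) (by
      intro h
      rw [div_eq_one_iff_eq (ne_of_gt h1p)] at h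
      linarith)
  have e1 : Real.log (p / q) = - Real.log (q / p) := by
    rw [← Real.log_inv, inv_div]
  have e2 : Real.log ((1 - p) / (1 - q)) = - Real.log ((1 - q) / (1 - p)) := by
    rw [← Real.log_inv, inv_div]
  unfold klBer
  rw [e1, e2]
  have hm1 : p * Real.log (q / p) < q - p := by
    have h := mul_lt_mul_of_pos_left h1 hp0
    have e : p * (q / p - 1) = q - p := by field_simp
    linarith [e ▸ h]
  have hm2 : (1 - p) * Real.log ((1 - q) / (1 - p)) < p - q := by
    have h := mul_lt_mul_of_pos_left h2 h1p
    have e : (1 - p) * ((1 - q) / (1 - p) - 1) = p - q := by field_simp; ring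
    linarith [e ▸ h]
  nlinarith

lemma mem_allPolicies_play {K k : ℕ} :
    Policy.play k ∈ allPolicies K ↔ 1 ≤ k ∧ k ≤ K := by
  simp [allPolicies, Finset.mem_Icc]

lemma mem_allPolicies_meas {K k l m : ℕ} :
    Policy.meas k l m ∈ allPolicies K ↔
      (1 ≤ k ∧ k ≤ K) ∧ (1 ≤ l ∧ l ≤ K) ∧ (1 ≤ m ∧ m ≤ K) := by
  simp [allPolicies, Finset.mem_Icc, Finset.mem_product]


/-- Case 1 (`u*(θ) = (1,2)`, perfect measurements) of the regret
lower-bound optimization problem: minimizing `Σ_u η_u (μ* − μ(u))` over nonnegative `η`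
subject to `η_{(k)} + η_{(k,1)} ≥ 1/I(θ_k,θ_2)` for `3 ≤ k ≤ K` has minimum value
`C(θ) = Σ_{k=3}^K (1−θ_1)(θ_2−θ_k)/I(θ_k,θ_2)`, attained at `η*` with
`η*_{(k,1)} = 1/I(θ_k,θ_2)` and all other coordinates zero. -/
theorem stmt6 (K : ℕ) (hK : 3 ≤ K) (θ : ℕ → ℝ)
    (h1 : θ 1 < 1) (hKpos : 0 < θ K)
    (hmono : ∀ i, 1 ≤ i → i < K → θ (i + 1) < θ i)
    (c : ℝ) (hc : 0 < c) (hcopt : c < θ 2 * (1 - θ 1)) :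
    IsLeast
      {x : ℝ | ∃ η : Policy → ℝ, (∀ u, 0 ≤ η u) ∧
        (∀ k, 3 ≤ k → k ≤ K →
          1 / klBer (θ k) (θ 2) ≤ η (.play k) + η (.meas k k 1)) ∧
        x = ∑ u ∈ allPolicies K,
          η u * ((-c + θ 1 + (1 - θ 1) * θ 2) - reward θ 0 c u)}
      (∑ k ∈ Finset.Icc 3 K, (1 - θ 1) * (θ 2 - θ k) / klBer (θ k) (θ 2)) ∧
    (∀ u, 0 ≤ etaStar6 K θ u) ∧
    (∀ k, 3 ≤ k → k ≤ K →
      1 / klBer (θ k) (θ 2)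
        ≤ etaStar6 K θ (.play k) + etaStar6 K θ (.meas k k 1)) ∧
    (∑ u ∈ allPolicies K,
        etaStar6 K θ u * ((-c + θ 1 + (1 - θ 1) * θ 2) - reward θ 0 c u)
      = ∑ k ∈ Finset.Icc 3 K, (1 - θ 1) * (θ 2 - θ k) / klBer (θ k) (θ 2)) := by

  -- basic monotonicity facts
  have hanti0 : ∀ j, j ≤ K → ∀ i, 1 ≤ i → i ≤ j → θ j ≤ θ i := by
    intro j
    induction j with
    | zero => intro _ i hi hij; omega
    | succ n ih =>
      intro hje i hi hij
      rcases Nat.eq_or_lt_of_le hij with rfl | h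
      · exact le_rfl
      · have hstep := hmono n (by omega) (by omega)
        have := ih (by omega) i hi (by omega)
        linarith
  have hanti : ∀ i j, 1 ≤ i → i ≤ j → j ≤ K → θ j ≤ θ i :=
    fun i j hi hij hjK => hanti0 j hjK i hi hij
  have hpos : ∀ k, 1 ≤ k → k ≤ K → 0 < θ k :=
    fun k h1k hkK => lt_of_lt_of_le hKpos (hanti k K h1k hkK le_rfl)
  have hlt1 : ∀ k, 1 ≤ k → k ≤ K → θ k < 1 :=
    fun k h1k hkK => lt_of_le_of_lt (hanti 1 k le_rfl h1k hkK) h1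
  have h2K : (2:ℕ) ≤ K := by omega
  have h2pos : 0 < θ 2 := hpos 2 (by omega) h2K
  have h21 : θ 2 < θ 1 := by
    have := hmono 1 le_rfl (by omega)
    simpa using this
  have h2lt1 : θ 2 < 1 := lt_trans h21 h1
  have h1pos : 0 < θ 1 := lt_trans h2pos h21
  have hk2 : ∀ k, 3 ≤ k → k ≤ K → θ k < θ 2 := by
    intro k h3 hkK
    have h32 : θ 3 < θ 2 := by
      have := hmono 2 (by omega) (by omega)
      simpa using this
    exact lt_of_le_of_lt (hanti 3 k (by omega) h3 hkK) h32
  have hI : ∀ k, 3 ≤ k → k ≤ K → 0 < klBer (θ k) (θ 2) := by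
    intro k h3 hkK
    exact klBer_pos' (hpos k (by omega) hkK) h2pos h2lt1 (hk2 k h3 hkK)
  -- regret nonnegativity
  have key : ∀ a t : ℝ, 0 ≤ a → a ≤ θ 1 → 0 ≤ t → t ≤ θ 1 → (t ≤ θ 2 ∨ a ≤ θ 2) →
      a + (1 - a) * t ≤ θ 1 + (1 - θ 1) * θ 2 := by
    rintro a t ha haθ ht htθ (h | h)
    · nlinarith [mul_nonneg (sub_nonneg.mpr haθ) (sub_nonneg.mpr h2lt1.le),
        mul_nonneg (sub_nonneg.mpr (haθ.trans h1.le)) (sub_nonneg.mpr h)]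
    · nlinarith [mul_nonneg (sub_nonneg.mpr (haθ.trans h1.le)) (sub_nonneg.mpr htθ),
        mul_nonneg (sub_nonneg.mpr h) (sub_nonneg.mpr (le_of_lt h1))]
  have hreg : ∀ u ∈ allPolicies K, reward θ 0 c u ≤ -c + θ 1 + (1 - θ 1) * θ 2 := by
    intro u hu
    rcases u with k | ⟨k, l, m⟩
    · rw [mem_allPolicies_play] at hu
      have := hanti 1 k le_rfl hu.1 hu.2
      have : 0 < (1 - θ 1) * θ 2 := mul_pos (by linarith) h2pos
      simp only [reward]
      linarith [hanti 1 k le_rfl hu.1 hu.2]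
    · rw [mem_allPolicies_meas] at hu
      obtain ⟨⟨hk1, hkK⟩, ⟨hl1, hlK⟩, ⟨hm1, hmK⟩⟩ := hu
      have hθk := hanti 1 k le_rfl hk1 hkK
      have hθl := hanti 1 l le_rfl hl1 hlK
      have hθm := hanti 1 m le_rfl hm1 hmK
      have hθk0 := (hpos k hk1 hkK).le
      have hθl0 := (hpos l hl1 hlK).le
      have hθm0 := (hpos m hm1 hmK).le
      simp only [reward, p0]
      norm_num
      split_ifs with hl hm hm
      · -- l = k, m = k
        have : 0 < (1 - θ 1) * θ 2 := mul_pos (by linarith) h2pos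
        linarith
      · -- l = k, m ≠ k
        have hdisj : θ m ≤ θ 2 ∨ θ k ≤ θ 2 := by
          rcases Nat.lt_or_ge m 2 with hm2 | hm2
          · right
            have : m = 1 := by omega
            subst this
            have : 2 ≤ k := by omega
            exact hanti 2 k (by omega) this hkK
          · left; exact hanti 2 m (by omega) hm2 hmK
        have := key (θ k) (θ m) hθk0 hθk hθm0 hθm hdisj
        linarith
      · -- l ≠ k, m = k
        have hA : θ k * θ l ≤ θ k := by nlinarith
        have : 0 < (1 - θ 1) * θ 2 := mul_pos (by linarith) h2pos
        linarith
      · -- l ≠ k, m ≠ k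
        have hA : θ k * θ l ≤ θ k := by nlinarith
        have hdisj : θ m ≤ θ 2 ∨ θ k ≤ θ 2 := by
          rcases Nat.lt_or_ge m 2 with hm2 | hm2
          · right
            have : m = 1 := by omega
            subst this
            have : 2 ≤ k := by omega
            exact hanti 2 k (by omega) this hkK
          · left; exact hanti 2 m (by omega) hm2 hmK
        have := key (θ k) (θ m) hθk0 hθk hθm0 hθm hdisj
        linarith
  -- the optimal value computation at etaStar6
  have hsubS2 : (Finset.Icc 3 K).image (fun k => Policy.meas k k 1) ⊆ allPolicies K := by
    intro u hu
    obtain ⟨k, hk, rfl⟩ := Finset.mem_image.mp hu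
    rw [Finset.mem_Icc] at hk
    rw [mem_allPolicies_meas]
    omega
  have hinj2 : ∀ x ∈ Finset.Icc 3 K, ∀ y ∈ Finset.Icc 3 K,
      (fun k => Policy.meas k k 1) x = (fun k => Policy.meas k k 1) y → x = y := by
    intro a _ b _ h
    simpa using h
  have hrewmeas : ∀ k, 3 ≤ k → reward θ 0 c (Policy.meas k k 1) =
      -c + θ k + (1 - θ k) * θ 1 := by
    intro k h3
    have h1k : ¬ (1 = k) := by omega
    simp only [reward, p0]
    rw [if_pos trivial, if_neg h1k]
    ring
  have hfinal : (∑ u ∈ allPolicies K,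
        etaStar6 K θ u * ((-c + θ 1 + (1 - θ 1) * θ 2) - reward θ 0 c u)
      = ∑ k ∈ Finset.Icc 3 K, (1 - θ 1) * (θ 2 - θ k) / klBer (θ k) (θ 2)) := by
    rw [← Finset.sum_subset hsubS2 ?_]
    · rw [Finset.sum_image hinj2]
      refine Finset.sum_congr rfl ?_
      intro k hk
      rw [Finset.mem_Icc] at hk
      have hIk := (hI k hk.1 hk.2).ne'
      rw [hrewmeas k hk.1]
      show (if k = k ∧ 1 = 1 ∧ 3 ≤ k ∧ k ≤ K then 1 / klBer (θ k) (θ 2) else 0) * _ = _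
      rw [if_pos ⟨rfl, rfl, hk.1, hk.2⟩]
      field_simp
      ring
    · intro u hu hnot
      rcases u with k | ⟨k, l, m⟩
      · simp [etaStar6]
      · show (if l = k ∧ m = 1 ∧ 3 ≤ k ∧ k ≤ K then 1 / klBer (θ k) (θ 2) else 0) * _ = 0
        split_ifs with h
        · exfalso
          apply hnot
          obtain ⟨hlk, hm1, h3, hKk⟩ := h
          subst hlk; subst hm1
          exact Finset.mem_image.mpr ⟨_, Finset.mem_Icc.mpr ⟨h3, hKk⟩, rfl⟩
        · exact zero_mul _
  -- properties of etaStar6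
  have hnnStar : ∀ u, 0 ≤ etaStar6 K θ u := by
    intro u
    rcases u with k | ⟨k, l, m⟩
    · exact le_rfl
    · show 0 ≤ if l = k ∧ m = 1 ∧ 3 ≤ k ∧ k ≤ K then 1 / klBer (θ k) (θ 2) else 0
      split_ifs with h
      · exact le_of_lt (one_div_pos.mpr (hI _ h.2.2.1 h.2.2.2))
      · exact le_rfl
  have hconStar : ∀ k, 3 ≤ k → k ≤ K →
      1 / klBer (θ k) (θ 2)
        ≤ etaStar6 K θ (.play k) + etaStar6 K θ (.meas k k 1) := by
    intro k h3 hkK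
    show 1 / klBer (θ k) (θ 2) ≤ 0 +
      (if k = k ∧ 1 = 1 ∧ 3 ≤ k ∧ k ≤ K then 1 / klBer (θ k) (θ 2) else 0)
    rw [if_pos ⟨rfl, rfl, h3, hkK⟩, zero_add]
  refine ⟨⟨⟨etaStar6 K θ, hnnStar, hconStar, hfinal.symm⟩, ?_⟩, hnnStar, hconStar, hfinal⟩
  -- lower bound
  rintro x ⟨η, hnn, hcon, rfl⟩
  set f : Policy → ℝ :=
    fun u => η u * ((-c + θ 1 + (1 - θ 1) * θ 2) - reward θ 0 c u) with hf
  have hsubS1 : (Finset.Icc 3 K).image Policy.play ⊆ allPolicies K := by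
    intro u hu
    obtain ⟨k, hk, rfl⟩ := Finset.mem_image.mp hu
    rw [Finset.mem_Icc] at hk
    rw [mem_allPolicies_play]
    omega
  have hdisj : Disjoint ((Finset.Icc 3 K).image Policy.play)
      ((Finset.Icc 3 K).image (fun k => Policy.meas k k 1)) := by
    rw [Finset.disjoint_left]
    rintro u h1' h2'
    obtain ⟨a, _, rfl⟩ := Finset.mem_image.mp h1'
    obtain ⟨b, _, hb⟩ := Finset.mem_image.mp h2'
    exact Policy.noConfusion hb
  have hinj1 : ∀ x ∈ Finset.Icc 3 K, ∀ y ∈ Finset.Icc 3 K,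
      Policy.play x = Policy.play y → x = y := by
    intro a _ b _ h
    simpa using h
  have step1 : ∑ u ∈ ((Finset.Icc 3 K).image Policy.play ∪
        (Finset.Icc 3 K).image (fun k => Policy.meas k k 1)), f u
      ≤ ∑ u ∈ allPolicies K, f u := by
    refine Finset.sum_le_sum_of_subset_of_nonneg
      (Finset.union_subset hsubS1 hsubS2) ?_
    intro u hu _
    exact mul_nonneg (hnn u) (by linarith [hreg u hu])
  have step2 : ∑ u ∈ ((Finset.Icc 3 K).image Policy.play ∪
        (Finset.Icc 3 K).image (fun k => Policy.meas k k 1)), f u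
      = ∑ k ∈ Finset.Icc 3 K, (f (Policy.play k) + f (Policy.meas k k 1)) := by
    rw [Finset.sum_union hdisj, Finset.sum_image hinj1, Finset.sum_image hinj2,
      ← Finset.sum_add_distrib]
  have step3 : ∀ k ∈ Finset.Icc 3 K,
      (1 - θ 1) * (θ 2 - θ k) / klBer (θ k) (θ 2)
        ≤ f (Policy.play k) + f (Policy.meas k k 1) := by
    intro k hk
    rw [Finset.mem_Icc] at hk
    obtain ⟨h3, hkK⟩ := hk
    have hIk := hI k h3 hkK
    have hθkpos := hpos k (by omega) hkK
    have hθk2 := hk2 k h3 hkK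
    have hD0 : (0:ℝ) ≤ (1 - θ 1) * (θ 2 - θ k) :=
      mul_nonneg (by linarith) (by linarith)
    have hkey := mul_le_mul_of_nonneg_right (hcon k h3 hkK) hD0
    have hΔp : (1 - θ 1) * (θ 2 - θ k) ≤ (-c + θ 1 + (1 - θ 1) * θ 2) - θ k := by
      nlinarith [mul_nonneg h1pos.le (sub_nonneg.mpr hθk2.le)]
    have hηp := hnn (Policy.play k)
    have hmul := mul_le_mul_of_nonneg_left hΔp hηp
    simp only [hf]
    rw [hrewmeas k h3]
    show (1 - θ 1) * (θ 2 - θ k) / klBer (θ k) (θ 2) ≤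
      η (Policy.play k) * ((-c + θ 1 + (1 - θ 1) * θ 2) - θ k) +
      η (Policy.meas k k 1) *
        ((-c + θ 1 + (1 - θ 1) * θ 2) - (-c + θ k + (1 - θ k) * θ 1))
    have hdivr : (1 - θ 1) * (θ 2 - θ k) / klBer (θ k) (θ 2)
        = 1 / klBer (θ k) (θ 2) * ((1 - θ 1) * (θ 2 - θ k)) := by ring
    rw [hdivr]
    linarith [hkey, hmul]
  calc ∑ k ∈ Finset.Icc 3 K, (1 - θ 1) * (θ 2 - θ k) / klBer (θ k) (θ 2)
      ≤ ∑ k ∈ Finset.Icc 3 K, (f (Policy.play k) + f (Policy.meas k k 1)) :=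
        Finset.sum_le_sum step3
    _ = _ := step2.symm
    _ ≤ _ := step1
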